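/- Let α ∈ (0,1), let k be a natural number with k ≥ 1, let m be a natural number, let c = ⌊1/(1−α)⌋, and set B₁ = ((2+k)^c − k^c)^(1/(c(1−α))). Then (2m+k)^(1/(1−α)) ≥ k^(1/(1−α)) + m·B₁. -/
import Mathlib

lemma real_add_rpow_le {x y p : ℝ} (hx : 0 ≤ x) (hy : 0 ≤ y) (hp : 1 ≤ p) :
    x ^ p + y ^ p ≤ (x + y) ^ p := by
  lift x to NNReal using hx
  lift y to NNReal using hy
  exact_mod_cast NNReal.add_rpow_le_rpow_add x y hp

/-- Binomial-expansion inequality over ℕ: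
`m*(2+k)^c + k^c ≤ (2*m+k)^c + m*k^c`. -/
lemma nat_binom_aux (m k c : ℕ) :
    m * (2 + k) ^ c + k ^ c ≤ (2 * m + k) ^ c + m * k ^ c := by
  have h1 : (2 * m + k) ^ c
      = ∑ i ∈ Finset.range (c + 1), (2 * m) ^ i * k ^ (c - i) * c.choose i :=
    add_pow (2 * m) k c
  have h2 : (2 + k) ^ c
      = ∑ i ∈ Finset.range (c + 1), 2 ^ i * k ^ (c - i) * c.choose i :=
    add_pow 2 k c
  rw [h1, h2, Finset.mul_sum]
  rw [Finset.sum_range_succ' (fun i => m * (2 ^ i * k ^ (c - i) * c.choose i)) c,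
      Finset.sum_range_succ' (fun i => (2 * m) ^ i * k ^ (c - i) * c.choose i) c]
  simp only [pow_zero, one_mul, Nat.sub_zero, Nat.choose_zero_right, mul_one]
  have hsum : ∑ i ∈ Finset.range c, m * (2 ^ (i + 1) * k ^ (c - (i + 1)) * c.choose (i + 1))
      ≤ ∑ i ∈ Finset.range c, (2 * m) ^ (i + 1) * k ^ (c - (i + 1)) * c.choose (i + 1) := by
    apply Finset.sum_le_sum
    intro i _
    have hm : m ≤ m ^ (i + 1) := Nat.le_self_pow (Nat.succ_ne_zero i) m
    calc m * (2 ^ (i + 1) * k ^ (c - (i + 1)) * c.choose (i + 1))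
        ≤ m ^ (i + 1) * (2 ^ (i + 1) * k ^ (c - (i + 1)) * c.choose (i + 1)) := by
          exact Nat.mul_le_mul_right _ hm
      _ = (2 * m) ^ (i + 1) * k ^ (c - (i + 1)) * c.choose (i + 1) := by
          rw [mul_pow]; ring
  omega

/-- The combinatorial inequality (lam_4_2) in the proof of Lemma 6.3(ii):
with `c = ⌊1/(1−α)⌋` and `B₁ = ((2+k)^c − k^c)^(1/(c(1−α)))`,
`(2m+k)^(1/(1−α)) ≥ k^(1/(1−α)) + m·B₁`. -/
theorem pow_superadditive_bound
    (α : ℝ) (hα : α ∈ Set.Ioo (0:ℝ) 1) (k m : ℕ) (hk : 1 ≤ k)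
    (c : ℕ) (hc : c = ⌊1 / (1 - α)⌋₊)
    (B₁ : ℝ) (hB₁ : B₁ = ((2 + (k:ℝ)) ^ c - (k:ℝ) ^ c) ^ (1 / ((c:ℝ) * (1 - α)))) :
    (2 * (m:ℝ) + k) ^ (1 / (1 - α)) ≥ (k:ℝ) ^ (1 / (1 - α)) + m * B₁ := by
  obtain ⟨hα0, hα1⟩ := hα
  have h1α : (0:ℝ) < 1 - α := by linarith
  have hβ1 : (1:ℝ) ≤ 1 / (1 - α) := by
    rw [le_div_iff₀ h1α]; linarith
  have hc1 : 1 ≤ c := by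
    rw [hc]; exact Nat.le_floor (by exact_mod_cast hβ1)
  have hcR : (0:ℝ) < c := by exact_mod_cast hc1
  have hcle : (c:ℝ) ≤ 1 / (1 - α) := by
    rw [hc]; exact Nat.floor_le (by positivity)
  set p : ℝ := 1 / ((c:ℝ) * (1 - α)) with hp
  have hp1 : (1:ℝ) ≤ p := by
    rw [hp, le_div_iff₀ (by positivity)]
    rw [one_mul]
    calc (c:ℝ) * (1 - α) ≤ (1 / (1 - α)) * (1 - α) := by
          exact mul_le_mul_of_nonneg_right hcle h1α.le
      _ = 1 := by field_simp
  have hcp : (c:ℝ) * p = 1 / (1 - α) := by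
    rw [hp]; field_simp
  -- base facts
  have hkR : (0:ℝ) ≤ (k:ℝ) := Nat.cast_nonneg k
  have hD : (0:ℝ) ≤ (2 + (k:ℝ)) ^ c - (k:ℝ) ^ c := by
    have : (k:ℝ) ^ c ≤ (2 + (k:ℝ)) ^ c :=
      pow_le_pow_left₀ hkR (by linarith) c
    linarith
  -- the binomial inequality over ℝ
  have hbin : (k:ℝ) ^ c + m * ((2 + (k:ℝ)) ^ c - (k:ℝ) ^ c) ≤ (2 * (m:ℝ) + k) ^ c := by
    have := nat_binom_aux m k c
    have hcast : ((m * (2 + k) ^ c + k ^ c : ℕ) : ℝ) ≤ (((2 * m + k) ^ c + m * k ^ c : ℕ) : ℝ) := by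
      exact_mod_cast this
    push_cast at hcast
    nlinarith [hcast]
  have hbase : (0:ℝ) ≤ (k:ℝ) ^ c + m * ((2 + (k:ℝ)) ^ c - (k:ℝ) ^ c) := by positivity
  have h2mk : (0:ℝ) ≤ 2 * (m:ℝ) + k := by positivity
  -- rewrite LHS
  have hL : (2 * (m:ℝ) + k) ^ (1 / (1 - α)) = ((2 * (m:ℝ) + k) ^ c) ^ p := by
    rw [← hcp, Real.rpow_mul h2mk, Real.rpow_natCast]
  have hK : ((k:ℝ) ^ c) ^ p = (k:ℝ) ^ (1 / (1 - α)) := by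
    rw [← Real.rpow_natCast (k:ℝ) c, ← Real.rpow_mul hkR, hcp]
  rw [ge_iff_le, hL]
  calc (k:ℝ) ^ (1 / (1 - α)) + m * B₁
      = ((k:ℝ) ^ c) ^ p + m * (((2 + (k:ℝ)) ^ c - (k:ℝ) ^ c) ^ p) := by rw [hK, hB₁]
    _ ≤ ((k:ℝ) ^ c) ^ p + (m:ℝ) ^ p * (((2 + (k:ℝ)) ^ c - (k:ℝ) ^ c) ^ p) := by
        have hmp : (m:ℝ) ≤ (m:ℝ) ^ p := by
          rcases Nat.eq_zero_or_pos m with hm | hm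
          · subst hm; simp [Real.zero_rpow (by positivity : p ≠ 0)]
          · have hm1 : (1:ℝ) ≤ (m:ℝ) := by exact_mod_cast hm
            calc (m:ℝ) = (m:ℝ) ^ (1:ℝ) := (Real.rpow_one _).symm
              _ ≤ (m:ℝ) ^ p := Real.rpow_le_rpow_of_exponent_le hm1 hp1
        have := mul_le_mul_of_nonneg_right hmp (Real.rpow_nonneg hD p)
        linarith
    _ = ((k:ℝ) ^ c) ^ p + ((m:ℝ) * ((2 + (k:ℝ)) ^ c - (k:ℝ) ^ c)) ^ p := by
        rw [Real.mul_rpow (Nat.cast_nonneg m) hD]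
    _ ≤ ((k:ℝ) ^ c + (m:ℝ) * ((2 + (k:ℝ)) ^ c - (k:ℝ) ^ c)) ^ p :=
        real_add_rpow_le (by positivity) (by positivity) hp1
    _ ≤ ((2 * (m:ℝ) + k) ^ c) ^ p :=
        Real.rpow_le_rpow hbase hbin (by linarith)
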